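/- For every integer i ≥ 0, the map sending j ∈ {0, 1, …, k−1} to s^i_j is a bijection from {0, 1, …, k−1} onto {i, i+1, …, i+k−1}. -/

import Mathlib

/-- The shifted modular progression `s^i_j` with parameters `m`, `k`. -/
def smp (m k : ℕ) : ℕ → ℕ → ℕ
  | 0, j => (j * m) % k
  | i + 1, j => if smp m k i j = i then smp m k i j + k else smp m k i j

theorem stmt_5 (m k : ℕ) (hm : 0 < m) (hk : 0 < k) (hmk : m < k)
    (hgcd : Nat.gcd m k = 1) (i : ℕ) :
    Set.BijOn (smp m k i) (Set.Ico 0 k) (Set.Ico i (i + k)) := by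
  induction i with
  | zero =>
    have hmaps : Set.MapsTo (smp m k 0) (Set.Ico 0 k) (Set.Ico 0 (0 + k)) := by
      intro j hj
      simp only [smp, Set.mem_Ico, zero_add]
      exact ⟨Nat.zero_le _, Nat.mod_lt _ hk⟩
    have hinj : Set.InjOn (smp m k 0) (Set.Ico 0 k) := by
      intro j1 h1 j2 h2 h
      simp only [smp] at h
      have : j1 ≡ j2 [MOD k] := Nat.ModEq.cancel_right_of_coprime (Nat.Coprime.symm hgcd) h
      have := this.eq_of_lt_of_lt h1.2 h2.2
      exact this
    have hfin : (Set.Ico 0 k).Finite := Set.finite_Ico 0 k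
    have himg : smp m k 0 '' (Set.Ico 0 k) = Set.Ico 0 (0 + k) := by
      apply Set.eq_of_subset_of_ncard_le (Set.mapsTo_iff_image_subset.mp hmaps)
      · rw [Set.ncard_image_of_injOn hinj]
        rw [← Finset.coe_Ico, ← Finset.coe_Ico, Set.ncard_coe_finset, Set.ncard_coe_finset]
        simp
    exact ⟨hmaps, hinj, himg.ge⟩
  | succ i ih =>
    obtain ⟨hmaps, hinj, hsurj⟩ := ih
    have hik : i ∈ Set.Ico i (i + k) := ⟨le_rfl, Nat.lt_add_of_pos_right hk⟩
    obtain ⟨j0, hj0, hfj0⟩ := hsurj hik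
    have hstep : ∀ j, smp m k (i + 1) j =
        if smp m k i j = i then smp m k i j + k else smp m k i j := fun j => rfl
    refine ⟨?_, ?_, ?_⟩
    · intro j hj
      rw [hstep]
      have hfj := hmaps hj
      split
      · rename_i h
        rw [h]
        exact ⟨by omega, by omega⟩
      · rename_i h
        simp only [Set.mem_Ico] at hfj ⊢
        omega
    · intro j1 h1 j2 h2 h
      rw [hstep, hstep] at h
      have hf1 := hmaps h1
      have hf2 := hmaps h2
      simp only [Set.mem_Ico] at hf1 hf2
      split at h <;> split at h
      · exact hinj h1 h2 (by omega)
      · omega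
      · omega
      · exact hinj h1 h2 h
    · intro y hy
      simp only [Set.mem_Ico] at hy
      by_cases hyk : y = i + k
      · refine ⟨j0, hj0, ?_⟩
        rw [hstep, if_pos hfj0, hfj0, hyk]
      · have : y ∈ Set.Ico i (i + k) := ⟨by omega, by omega⟩
        obtain ⟨j, hj, hfj⟩ := hsurj this
        refine ⟨j, hj, ?_⟩
        rw [hstep, if_neg (by omega), hfj]
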